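/- Let (B, 𝔼, 𝔰) be an extriangulated category, let A ↣ B ↠ C be an 𝔼-triangle realizing δ ∈ 𝔼(C,A), and let f: A → D be a morphism. Suppose D ↣ E ↠ C is a conflation realizing f_*δ and there is a commutative diagram with rows these two conflations, vertical maps f: A → D, g: B → E, and identity on C. Then there exists g': B → E such that the sequence A → D ⊕ B → E, with first map having components (−f, a) and second map (d, g'), is a conflation, and moreover g' ∘ a = d ∘ f and e ∘ g' = b, where a: A ↣ B, b: B ↠ C, d: D ↣ E, e: E ↠ C are the given inflations/deflations. -/

import Mathlib

open CategoryTheory Category Limits Opposite ZeroObject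

universe v u

namespace ExtStmt

variable (B : Type u) [Category.{v} B] [Preadditive B] [HasZeroObject B] [HasBinaryBiproducts B]

/-- An extriangulated category structure on an additive category `B`,
following Nakaoka–Palu. `E` is the biadditive extension bifunctor, and `Real δ X a b`
expresses that the sequence `A ⟶ X ⟶ C` (given by `a`, `b`) belongs to the equivalence
class `𝔰(δ)`, i.e. realizes the extension `δ ∈ 𝔼(C, A)`. -/
structure Extriangulated where
  /-- The extension bifunctor `𝔼 : Bᵒᵖ × B ⥤ Ab`. -/
  E : Bᵒᵖ ⥤ B ⥤ AddCommGrpCat.{v}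
  /-- `𝔼(C, -)` is additive. -/
  addE₁ : ∀ C : Bᵒᵖ, (E.obj C).Additive
  /-- `𝔼(-, A)` is additive. -/
  addE₂ : ∀ A : B, (E.flip.obj A).Additive
  /-- The realization: `Real δ X a b` means `A ⟶ X ⟶ C` realizes `δ ∈ 𝔼(C, A)`. -/
  Real : ∀ {A C : B}, ((E.obj (op C)).obj A) → ∀ (X : B), (A ⟶ X) → (X ⟶ C) → Prop
  /-- Every extension is realized by some sequence. -/
  real_ex : ∀ {A C : B} (δ : (E.obj (op C)).obj A),
    ∃ (X : B) (a : A ⟶ X) (b : X ⟶ C), Real δ X a b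
  /-- `𝔰(δ)` is closed under the equivalence of sequences. -/
  real_iso : ∀ {A C X X' : B} (δ : (E.obj (op C)).obj A) (a : A ⟶ X) (b : X ⟶ C) (i : X ≅ X'),
    Real δ X a b → Real δ X' (a ≫ i.hom) (i.inv ≫ b)
  /-- Any two realizations of `δ` are equivalent sequences. -/
  real_unique : ∀ {A C X X' : B} (δ : (E.obj (op C)).obj A) (a : A ⟶ X) (b : X ⟶ C)
    (a' : A ⟶ X') (b' : X' ⟶ C), Real δ X a b → Real δ X' a' b' →
    ∃ i : X ≅ X', a ≫ i.hom = a' ∧ i.hom ≫ b' = b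
  /-- Realization of morphisms of extensions: if `f_*δ = h^*δ'` then the pair `(f, h)` is
  realized by some `(f, g, h)`. -/
  real_mor : ∀ {A C A' C' X X' : B} (δ : (E.obj (op C)).obj A) (δ' : (E.obj (op C')).obj A')
    (f : A ⟶ A') (h : C ⟶ C') (a : A ⟶ X) (b : X ⟶ C) (a' : A' ⟶ X') (b' : X' ⟶ C'),
    Real δ X a b → Real δ' X' a' b' →
    ((E.obj (op C)).map f) δ = ((E.map h.op).app A') δ' →
    ∃ g : X ⟶ X', a ≫ g = f ≫ a' ∧ g ≫ b' = b ≫ h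
  /-- Additivity of the realization: `0` is realized by the split sequence. -/
  real_zero : ∀ (A C : B),
    Real (0 : (E.obj (op C)).obj A) (A ⊞ C) biprod.inl biprod.snd
  /-- Additivity of the realization: direct sums. -/
  real_sum : ∀ {A C A' C' X X' : B} (δ : (E.obj (op C)).obj A) (δ' : (E.obj (op C')).obj A')
    (a : A ⟶ X) (b : X ⟶ C) (a' : A' ⟶ X') (b' : X' ⟶ C'),
    Real δ X a b → Real δ' X' a' b' →
    Real (((E.map (biprod.fst : C ⊞ C' ⟶ C).op).app (A ⊞ A'))
            (((E.obj (op C)).map (biprod.inl : A ⟶ A ⊞ A')) δ)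
          + ((E.map (biprod.snd : C ⊞ C' ⟶ C').op).app (A ⊞ A'))
            (((E.obj (op C')).map (biprod.inr : A' ⟶ A ⊞ A')) δ'))
      (X ⊞ X') (biprod.map a a') (biprod.map b b')
  /-- Axiom (ET3). -/
  et3 : ∀ {A C A' C' X X' : B} (δ : (E.obj (op C)).obj A) (δ' : (E.obj (op C')).obj A')
    (a : A ⟶ X) (b : X ⟶ C) (a' : A' ⟶ X') (b' : X' ⟶ C') (f : A ⟶ A') (g : X ⟶ X'),
    Real δ X a b → Real δ' X' a' b' → a ≫ g = f ≫ a' →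
    ∃ h : C ⟶ C', g ≫ b' = b ≫ h ∧ ((E.obj (op C)).map f) δ = ((E.map h.op).app A') δ'
  /-- Axiom (ET3ᵒᵖ). -/
  et3op : ∀ {A C A' C' X X' : B} (δ : (E.obj (op C)).obj A) (δ' : (E.obj (op C')).obj A')
    (a : A ⟶ X) (b : X ⟶ C) (a' : A' ⟶ X') (b' : X' ⟶ C') (g : X ⟶ X') (h : C ⟶ C'),
    Real δ X a b → Real δ' X' a' b' → g ≫ b' = b ≫ h →
    ∃ f : A ⟶ A', a ≫ g = f ≫ a' ∧ ((E.obj (op C)).map f) δ = ((E.map h.op).app A') δ'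
  /-- Axiom (ET4). -/
  et4 : ∀ {A B₀ D C₀ F : B} (δ : (E.obj (op D)).obj A) (δ' : (E.obj (op F)).obj B₀)
    (a : A ⟶ B₀) (a' : B₀ ⟶ D) (bb : B₀ ⟶ C₀) (b' : C₀ ⟶ F),
    Real δ B₀ a a' → Real δ' C₀ bb b' →
    ∃ (E₀ : B) (c' : C₀ ⟶ E₀) (δ'' : (E.obj (op E₀)).obj A) (d : D ⟶ E₀) (e : E₀ ⟶ F),
      Real δ'' C₀ (a ≫ bb) c' ∧
      Real (((E.obj (op F)).map a') δ') E₀ d e ∧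
      a' ≫ d = bb ≫ c' ∧ c' ≫ e = b' ∧
      ((E.map d.op).app A) δ'' = δ ∧
      ((E.obj (op E₀)).map a) δ'' = ((E.map e.op).app B₀) δ'
  /-- Axiom (ET4ᵒᵖ). -/
  et4op : ∀ {A C₀ E₀ D F : B} (δ'' : (E.obj (op E₀)).obj A) (θ : (E.obj (op F)).obj D)
    (c : A ⟶ C₀) (c' : C₀ ⟶ E₀) (d : D ⟶ E₀) (e : E₀ ⟶ F),
    Real δ'' C₀ c c' → Real θ E₀ d e →
    ∃ (B₀ : B) (a : A ⟶ B₀) (a' : B₀ ⟶ D) (bb : B₀ ⟶ C₀)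
      (δ : (E.obj (op D)).obj A) (δ' : (E.obj (op F)).obj B₀),
      Real δ B₀ a a' ∧ Real δ' C₀ bb (c' ≫ e) ∧
      a ≫ bb = c ∧ a' ≫ d = bb ≫ c' ∧
      θ = ((E.obj (op F)).map a') δ' ∧
      ((E.map d.op).app A) δ'' = δ ∧
      ((E.obj (op E₀)).map a) δ'' = ((E.map e.op).app B₀) δ'

variable {B}

/-- The group of extensions `𝔼(C, A)`. -/
abbrev Extriangulated.Ext (T : Extriangulated B) (C A : B) : Type v :=
  (T.E.obj (op C)).obj A

/-- `f_*δ`, the pushforward of an extension along `f : A ⟶ A'`. -/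
abbrev Extriangulated.push (T : Extriangulated B) {C A A' : B} (f : A ⟶ A')
    (δ : T.Ext C A) : T.Ext C A' :=
  ((T.E.obj (op C)).map f) δ

/-- `g^*δ`, the pullback of an extension along `g : C ⟶ C'`. -/
abbrev Extriangulated.pull (T : Extriangulated B) {C C' A : B} (g : C ⟶ C')
    (δ : T.Ext C' A) : T.Ext C A :=
  ((T.E.map g.op).app A) δ

/-- A pair of composable morphisms is a conflation if it realizes some extension. -/
def Extriangulated.IsConflation (T : Extriangulated B) {A X C : B}
    (a : A ⟶ X) (b : X ⟶ C) : Prop :=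
  ∃ δ : T.Ext C A, T.Real δ X a b


set_option linter.unusedSectionVars false

section Hearts

variable {B : Type u} [Category.{v} B] [Preadditive B] [HasZeroObject B] [HasBinaryBiproducts B]

def wRel (Wp : B → Prop) (P : B → Prop) : HomRel (ObjectProperty.FullSubcategory P) :=
  fun {X Y} f g =>
    ∃ (Wo : B) (_ : Wp Wo) (p : X.obj ⟶ Wo) (q : Wo ⟶ Y.obj), p ≫ q = (f - g).hom

abbrev HeartCat (Wp : B → Prop) (P : B → Prop) := CategoryTheory.Quotient (wRel Wp P)

theorem wRel_congruence (Wp P : B → Prop) (hW0 : Wp (0 : B))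
    (hWbi : ∀ {X Y : B}, Wp X → Wp Y → Wp (X ⊞ Y)) : Congruence (wRel Wp P) where
  equivalence := by
    refine fun {X Y} => ⟨?_, ?_, ?_⟩
    · intro f
      exact ⟨0, hW0, 0, 0, by change _ = f.hom - f.hom; simp⟩
    · rintro f g ⟨Wo, hw, p, q, h⟩
      change _ = f.hom - g.hom at h
      exact ⟨Wo, hw, -p, q, by change _ = g.hom - f.hom; rw [Preadditive.neg_comp, h]; abel⟩
    · rintro f g h ⟨W₁, hw₁, p₁, q₁, h₁⟩ ⟨W₂, hw₂, p₂, q₂, h₂⟩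
      change _ = f.hom - g.hom at h₁
      change _ = g.hom - h.hom at h₂
      exact ⟨W₁ ⊞ W₂, hWbi hw₁ hw₂, biprod.lift p₁ p₂, biprod.desc q₁ q₂, by
        change _ = f.hom - h.hom
        rw [biprod.lift_desc, h₁, h₂]; abel⟩
  comp_left := by
    rintro X Y Z f g g' ⟨Wo, hw, p, q, h⟩
    change _ = g.hom - g'.hom at h
    exact ⟨Wo, hw, f.hom ≫ p, q, by
      change _ = f.hom ≫ g.hom - f.hom ≫ g'.hom
      rw [Category.assoc, h, Preadditive.comp_sub]⟩
  comp_right := by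
    rintro X Y Z f f' g ⟨Wo, hw, p, q, h⟩
    change _ = f.hom - f'.hom at h
    exact ⟨Wo, hw, p, q ≫ g.hom, by
      change _ = f.hom ≫ g.hom - f'.hom ≫ g.hom
      rw [← Category.assoc, h, Preadditive.sub_comp]⟩

theorem wRel_add (Wp P : B → Prop)
    (hWbi : ∀ {X Y : B}, Wp X → Wp Y → Wp (X ⊞ Y)) :
    ∀ ⦃X Y : ObjectProperty.FullSubcategory P⦄ (f₁ f₂ g₁ g₂ : X ⟶ Y) (_ : wRel Wp P f₁ f₂)
      (_ : wRel Wp P g₁ g₂), wRel Wp P (f₁ + g₁) (f₂ + g₂) := by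
  rintro X Y f₁ f₂ g₁ g₂ ⟨W₁, hw₁, p₁, q₁, h₁⟩ ⟨W₂, hw₂, p₂, q₂, h₂⟩
  change _ = f₁.hom - f₂.hom at h₁
  change _ = g₁.hom - g₂.hom at h₂
  exact ⟨W₁ ⊞ W₂, hWbi hw₁ hw₂, biprod.lift p₁ p₂, biprod.desc q₁ q₂, by
    change _ = (f₁.hom + g₁.hom) - (f₂.hom + g₂.hom)
    rw [biprod.lift_desc, h₁, h₂]; abel⟩

/-- The heart is preadditive. -/
def heartPreadditive (Wp P : B → Prop) (hW0 : Wp (0 : B))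
    (hWbi : ∀ {X Y : B}, Wp X → Wp Y → Wp (X ⊞ Y)) : Preadditive (HeartCat Wp P) :=
  letI := wRel_congruence Wp P hW0 hWbi
  Quotient.preadditive _ (wRel_add Wp P hWbi)

/-- The heart has zero morphisms. -/
def heartZeroMorphisms (Wp P : B → Prop) (hW0 : Wp (0 : B))
    (hWbi : ∀ {X Y : B}, Wp X → Wp Y → Wp (X ⊞ Y)) : HasZeroMorphisms (HeartCat Wp P) :=
  letI := heartPreadditive Wp P hW0 hWbi
  inferInstance

/-- A full additive subcategory closed under direct summands and isomorphisms. -/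
structure IsGoodSubcat (P : B → Prop) : Prop where
  mem_of_iso : ∀ {X Y : B}, (X ≅ Y) → P X → P Y
  zero_mem : P (0 : B)
  biprod_mem : ∀ {X Y : B}, P X → P Y → P (X ⊞ Y)
  summand_mem : ∀ {X Y : B}, P (X ⊞ Y) → P X

/-- `(U, V)` is a cotorsion pair on the extriangulated category `(B, 𝔼, 𝔰)`. -/
structure IsCotorsionPair (T : Extriangulated B) (U V : B → Prop) : Prop where
  subU : IsGoodSubcat U
  subV : IsGoodSubcat V
  ext_vanish : ∀ {u v : B}, U u → V v → ∀ δ : T.Ext u v, δ = 0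
  cone : ∀ X : B, ∃ (v u : B) (f : v ⟶ u) (g : u ⟶ X), V v ∧ U u ∧ T.IsConflation f g
  cocone : ∀ X : B, ∃ (v u : B) (f : X ⟶ v) (g : v ⟶ u), V v ∧ U u ∧ T.IsConflation f g

/-- `((S,Tc),(U,V))` is a twin cotorsion pair: two cotorsion pairs with `𝔼(S, V) = 0`. -/
def IsTwinCotorsionPair (T : Extriangulated B) (S Tc U V : B → Prop) : Prop :=
  IsCotorsionPair T S Tc ∧ IsCotorsionPair T U V ∧
    ∀ {s v : B}, S s → V v → ∀ δ : T.Ext s v, δ = 0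

/-- Projective object of an extriangulated category. -/
def IsProjObj (T : Extriangulated B) (P : B) : Prop :=
  ∀ {A X C : B} (a : A ⟶ X) (b : X ⟶ C), T.IsConflation a b →
    ∀ c : P ⟶ C, ∃ d : P ⟶ X, d ≫ b = c

/-- Injective object of an extriangulated category. -/
def IsInjObj (T : Extriangulated B) (I : B) : Prop :=
  ∀ {A X C : B} (a : A ⟶ X) (b : X ⟶ C), T.IsConflation a b →
    ∀ c : A ⟶ I, ∃ d : X ⟶ I, a ≫ d = c

/-- `B` has enough projectives. -/
def HasEnoughProj (T : Extriangulated B) : Prop :=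
  ∀ C : B, ∃ (A P : B) (f : A ⟶ P) (p : P ⟶ C), IsProjObj T P ∧ T.IsConflation f p

/-- `B` has enough injectives. -/
def HasEnoughInj (T : Extriangulated B) : Prop :=
  ∀ A : B, ∃ (I C : B) (i : A ⟶ I) (p : I ⟶ C), IsInjObj T I ∧ T.IsConflation i p

/-- `W = Tc ∩ U`. -/
def Wpred (Tc U : B → Prop) : B → Prop := fun X => Tc X ∧ U X

/-- `CoCone(P, Q)`: objects `X` with a conflation `X ↣ P' ↠ Q'`, `P' ∈ P`, `Q' ∈ Q`. -/
def CoConeOf (T : Extriangulated B) (P Q : B → Prop) : B → Prop := fun X =>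
  ∃ (p q : B) (f : X ⟶ p) (g : p ⟶ q), P p ∧ Q q ∧ T.IsConflation f g

/-- `Cone(P, Q)`: objects `X` with a conflation `P' ↣ Q' ↠ X`, `P' ∈ P`, `Q' ∈ Q`. -/
def ConeOf (T : Extriangulated B) (P Q : B → Prop) : B → Prop := fun X =>
  ∃ (p q : B) (f : p ⟶ q) (g : q ⟶ X), P p ∧ Q q ∧ T.IsConflation f g

/-- `P * Q`: objects `X` with a conflation `P' ↣ X ↠ Q'`, `P' ∈ P`, `Q' ∈ Q`. -/
def StarOf (T : Extriangulated B) (P Q : B → Prop) : B → Prop := fun X =>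
  ∃ (p q : B) (f : p ⟶ X) (g : X ⟶ q), P p ∧ Q q ∧ T.IsConflation f g

/-- `B⁻ = CoCone(W, S)`. -/
def Bminus (T : Extriangulated B) (S Tc U : B → Prop) : B → Prop :=
  CoConeOf T (Wpred Tc U) S

/-- `B⁺ = Cone(V, W)`. -/
def Bplus (T : Extriangulated B) (Tc U V : B → Prop) : B → Prop :=
  ConeOf T V (Wpred Tc U)

/-- `H = B⁻ ∩ B⁺`, the objects of the heart. -/
def HeartPred (T : Extriangulated B) (S Tc U V : B → Prop) : B → Prop := fun X =>
  Bminus T S Tc U X ∧ Bplus T Tc U V X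

/-- The heart `H̄ = H/[W]` of a twin cotorsion pair. -/
abbrev TwinHeart (T : Extriangulated B) (S Tc U V : B → Prop) :=
  HeartCat (Wpred Tc U) (HeartPred T S Tc U V)

/-- Zero morphisms on the heart of a twin cotorsion pair. -/
def heartZeroOfTwin (T : Extriangulated B) {S Tc U V : B → Prop}
    (h : IsTwinCotorsionPair T S Tc U V) (P : B → Prop) :
    HasZeroMorphisms (HeartCat (Wpred Tc U) P) :=
  heartZeroMorphisms _ _ ⟨h.1.subV.zero_mem, h.2.1.subU.zero_mem⟩
    (fun hx hy => ⟨h.1.subV.biprod_mem hx.1 hy.1, h.2.1.subU.biprod_mem hx.2 hy.2⟩)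

end Hearts


section Aux

variable {B : Type u} [Category.{v} B] [Preadditive B] [HasZeroObject B]
  [HasBinaryBiproducts B] (T : Extriangulated B)

lemma Extriangulated.aux_push_push {C A₁ A₂ A₃ : B} (f : A₁ ⟶ A₂) (g : A₂ ⟶ A₃)
    (x : T.Ext C A₁) : T.push g (T.push f x) = T.push (f ≫ g) x := by
  rw [Extriangulated.push, Extriangulated.push, Extriangulated.push,
    CategoryTheory.Functor.map_comp]
  rfl

lemma Extriangulated.aux_push_pull {A A' C C' : B} (f : A ⟶ A') (h : C' ⟶ C) (x : T.Ext C A) :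
    T.push f (T.pull h x) = T.pull h (T.push f x) := by
  have h1 := (T.E.map h.op).naturality f
  have h2 := congrArg (fun (u : (T.E.obj (op C)).obj A ⟶ (T.E.obj (op C')).obj A') => u x) h1
  exact h2.symm

lemma Extriangulated.aux_pull_pull {A C C' C'' : B} (g : C'' ⟶ C') (h : C' ⟶ C)
    (x : T.Ext C A) : T.pull g (T.pull h x) = T.pull (g ≫ h) x := by
  rw [Extriangulated.pull, Extriangulated.pull, Extriangulated.pull, op_comp,
    CategoryTheory.Functor.map_comp]
  rfl

lemma Extriangulated.aux_push_id {A C : B} (x : T.Ext C A) : T.push (𝟙 A) x = x := by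
  rw [Extriangulated.push, CategoryTheory.Functor.map_id]
  rfl

lemma Extriangulated.aux_pull_id {A C : B} (x : T.Ext C A) : T.pull (𝟙 C) x = x := by
  rw [Extriangulated.pull, op_id, CategoryTheory.Functor.map_id]
  rfl

lemma Extriangulated.aux_real_zero' (X : B) : T.Real (0 : T.Ext (0 : B) X) X (𝟙 X) 0 := by
  have h1 := T.real_iso _ _ _
    (Iso.mk (biprod.fst : X ⊞ (0 : B) ⟶ X) (biprod.lift (𝟙 X) 0)
      (by
        apply biprod.hom_ext
        · simp
        · exact (Limits.isZero_zero B).eq_of_tgt _ _)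
      (by simp))
    (T.real_zero X (0 : B))
  convert h1 using 2
  · simp
  · exact (Limits.isZero_zero B).eq_of_tgt _ _

lemma Extriangulated.aux_fact {A C X Y : B} (δ : T.Ext C A) (p : A ⟶ X) (q : X ⟶ C)
    (hr : T.Real δ X p q) (t : Y ⟶ X) (ht : t ≫ q = 0) : ∃ u : Y ⟶ A, t = u ≫ p := by
  obtain ⟨u, hu, -⟩ := T.et3op (0 : T.Ext (0 : B) Y) δ (𝟙 Y) 0 p q t 0
    (T.aux_real_zero' Y) hr (by simp [ht])
  exact ⟨u, by simpa using hu⟩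

lemma Extriangulated.aux_isoPull {A C₁ C₂ Y : B} (η : T.Ext C₂ A) (h : C₁ ≅ C₂) (p : A ⟶ Y)
    (q : Y ⟶ C₂) (hr : T.Real η Y p q) : T.Real (T.pull h.hom η) Y p (q ≫ h.inv) := by
  obtain ⟨N, s, t, hN⟩ := T.real_ex (T.pull h.hom η)
  obtain ⟨w, hw1, hw2⟩ := T.real_mor (T.pull h.hom η) η (𝟙 A) h.hom s t p q hN hr
    (T.aux_push_id _)
  rw [id_comp] at hw1
  obtain ⟨w', hw1', hw2'⟩ := T.real_mor η (T.pull h.hom η) (𝟙 A) h.inv p q s t hr hN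
    (by
      show T.push (𝟙 A) η = T.pull h.inv (T.pull h.hom η)
      rw [T.aux_push_id, T.aux_pull_pull, Iso.inv_hom_id, T.aux_pull_id])
  rw [id_comp] at hw1'
  set t₀ : Y ⟶ Y := w' ≫ w - 𝟙 Y with ht₀
  have hk₀ : w' ≫ w = 𝟙 Y + t₀ := by rw [ht₀]; abel
  have hpt₀ : p ≫ t₀ = 0 := by
    rw [ht₀, Preadditive.comp_sub, ← assoc, hw1', hw1, comp_id, sub_self]
  have ht₀q : t₀ ≫ q = 0 := by
    rw [ht₀, Preadditive.sub_comp, assoc, hw2, ← assoc, hw2', assoc, h.inv_hom_id,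
      comp_id, id_comp, sub_self]
  obtain ⟨u, hu⟩ := T.aux_fact η p q hr t₀ ht₀q
  have ht₀₀ : t₀ ≫ t₀ = 0 := by nth_rewrite 1 [hu]; rw [assoc, hpt₀, comp_zero]
  set t₁ : N ⟶ N := w ≫ w' - 𝟙 N with ht₁
  have hk₁ : w ≫ w' = 𝟙 N + t₁ := by rw [ht₁]; abel
  have hst₁ : s ≫ t₁ = 0 := by
    rw [ht₁, Preadditive.comp_sub, ← assoc, hw1, hw1', comp_id, sub_self]
  have ht₁t : t₁ ≫ t = 0 := by
    rw [ht₁, Preadditive.sub_comp, assoc, hw2', ← assoc, hw2, assoc, h.hom_inv_id,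
      comp_id, id_comp, sub_self]
  obtain ⟨u', hu'⟩ := T.aux_fact (T.pull h.hom η) s t hN t₁ ht₁t
  have ht₁₁ : t₁ ≫ t₁ = 0 := by nth_rewrite 1 [hu']; rw [assoc, hst₁, comp_zero]
  have hwr : w ≫ w' ≫ (𝟙 N - t₁) = 𝟙 N := by
    rw [← assoc, hk₁]
    simp only [Preadditive.add_comp, Preadditive.comp_sub, Preadditive.sub_comp,
      id_comp, comp_id, ht₁₁, sub_zero]
    abel
  have hlw : ((𝟙 Y - t₀) ≫ w') ≫ w = 𝟙 Y := by
    rw [assoc, hk₀]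
    simp only [Preadditive.add_comp, Preadditive.comp_add, Preadditive.sub_comp,
      id_comp, comp_id, ht₀₀, sub_zero]
    abel
  have hrl : w' ≫ (𝟙 N - t₁) = (𝟙 Y - t₀) ≫ w' := by
    calc w' ≫ (𝟙 N - t₁) = (((𝟙 Y - t₀) ≫ w') ≫ w) ≫ (w' ≫ (𝟙 N - t₁)) := by
          rw [hlw, id_comp]
      _ = ((𝟙 Y - t₀) ≫ w') ≫ (w ≫ w' ≫ (𝟙 N - t₁)) := by simp only [assoc]
      _ = (𝟙 Y - t₀) ≫ w' := by rw [hwr, comp_id]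
  have hiw : (w' ≫ (𝟙 N - t₁)) ≫ w = 𝟙 Y := by rw [hrl]; exact hlw
  set i : N ≅ Y := ⟨w, w' ≫ (𝟙 N - t₁), hwr, hiw⟩ with hidef
  have h3 := T.real_iso _ s t i hN
  have e1 : s ≫ i.hom = p := hw1
  have e2 : i.inv ≫ t = q ≫ h.inv := by
    show (w' ≫ (𝟙 N - t₁)) ≫ t = q ≫ h.inv
    rw [assoc, Preadditive.sub_comp, id_comp, ht₁t, sub_zero, hw2']
  rw [e1, e2] at h3
  exact h3

end Aux

/-- Liu–Nakaoka Prop. 1.20: given an 𝔼-triangle `A ↣ B ↠ C` realizing `δ`, a morphism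
`f : A ⟶ D`, a conflation `D ↣ E ↠ C` realizing `f_*δ`, and a commutative diagram with
vertical maps `f`, `g`, `𝟙 C`, there exists `g' : B ⟶ E` such that
`A → D ⊕ B → E` (with maps `(-f, a)` and `(d, g')`) is a conflation, `a ≫ g' = f ≫ d`
and `g' ≫ e = b`. -/
theorem stmt19 {B : Type u} [Category.{v} B] [Preadditive B] [HasZeroObject B]
    [HasBinaryBiproducts B] (T : Extriangulated B) {A X₀ C D E₀ : B}
    (δ : T.Ext C A) (a : A ⟶ X₀) (b : X₀ ⟶ C) (hab : T.Real δ X₀ a b)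
    (f : A ⟶ D) (d : D ⟶ E₀) (e : E₀ ⟶ C) (hde : T.Real (T.push f δ) E₀ d e)
    (g : X₀ ⟶ E₀) (hg₁ : a ≫ g = f ≫ d) (hg₂ : g ≫ e = b) :
    ∃ g' : X₀ ⟶ E₀,
      T.IsConflation (biprod.lift (-f) a) (biprod.desc d g') ∧
      a ≫ g' = f ≫ d ∧ g' ≫ e = b := by
  -- The split triangle `D = D → 0`.
  have hz : T.Real (0 : T.Ext (0 : B) D) D (𝟙 D) 0 := T.aux_real_zero' D
  -- The direct sum triangle `D ⊞ A → D ⊞ X₀ → 0 ⊞ C`.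
  have hsum := T.real_sum (0 : T.Ext (0 : B) D) δ (𝟙 D) 0 a b hz hab
  simp only [map_zero, zero_add] at hsum
  -- hsum : Real (pull snd (push inr δ)) (D ⊞ X₀) (map (𝟙 D) a) (map 0 b)
  -- The sheared split triangle `A → D ⊞ A → D`.
  have hj : T.Real (0 : T.Ext D A) (D ⊞ A) (biprod.lift (-f) (𝟙 A))
      (biprod.fst + biprod.snd ≫ f) := by
    have h1 := T.real_iso _ _ _
      (Iso.mk (biprod.lift (biprod.snd - biprod.fst ≫ f) biprod.fst)
        (biprod.lift biprod.snd (biprod.fst + biprod.snd ≫ f))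
        (by
          apply biprod.hom_ext <;>
            simp [Preadditive.sub_comp, Preadditive.comp_sub, Preadditive.comp_add,
              Preadditive.add_comp])
        (by
          apply biprod.hom_ext <;>
            simp [Preadditive.sub_comp, Preadditive.comp_sub, Preadditive.comp_add,
              Preadditive.add_comp]))
      (T.real_zero A D)
    convert h1 using 2
    · apply biprod.hom_ext <;> simp [Preadditive.comp_sub]
    · simp
  -- Apply (ET4) to the two triangles above.
  obtain ⟨E₁, c', δ'', d₁, e₁, h1, h2, h3, h4, -, -⟩ :=
    T.et4 (0 : T.Ext D A) _ (biprod.lift (-f) (𝟙 A)) (biprod.fst + biprod.snd ≫ f)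
      (biprod.map (𝟙 D) a) (biprod.map 0 b) hj hsum
  have hm : biprod.lift (-f) (𝟙 A) ≫ biprod.map (𝟙 D) a = biprod.lift (-f) a := by
    apply biprod.hom_ext <;> simp
  rw [hm] at h1
  -- identify the extension realized on E₁
  have hξ : T.push (biprod.fst + biprod.snd ≫ f)
      (T.pull (biprod.snd : (0 : B) ⊞ C ⟶ C) (T.push (biprod.inr : A ⟶ D ⊞ A) δ))
      = T.pull biprod.snd (T.push f δ) := by
    rw [T.aux_push_pull, T.aux_push_push]
    congr 2
    simp [Preadditive.comp_add]
  have h2' : T.Real (T.push (biprod.fst + biprod.snd ≫ f)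
      (T.pull (biprod.snd : (0 : B) ⊞ C ⟶ C) (T.push (biprod.inr : A ⟶ D ⊞ A) δ))) E₁ d₁ e₁ := h2
  rw [hξ] at h2'
  -- realize the same extension on E₀ by transport along the iso `0 ⊞ C ≅ C`
  have hiso : ∀ (Z : B), (biprod.snd : (0 : B) ⊞ Z ⟶ Z) ≫ biprod.inr = 𝟙 _ := by
    intro Z
    apply biprod.hom_ext
    · exact (Limits.isZero_zero B).eq_of_tgt _ _
    · simp
  have hE0 : T.Real (T.pull (biprod.snd : (0 : B) ⊞ C ⟶ C) (T.push f δ)) E₀ d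
      (e ≫ biprod.inr) :=
    T.aux_isoPull (T.push f δ)
      (⟨biprod.snd, biprod.inr, hiso C, biprod.inr_snd⟩ : ((0 : B) ⊞ C) ≅ C) d e hde
  obtain ⟨i, hi1, hi2⟩ := T.real_unique _ d₁ e₁ d (e ≫ biprod.inr) h2' hE0
  -- transport δ'' along i
  have h1' := T.aux_isoPull δ'' i.symm (biprod.lift (-f) a) c' h1
  rw [Iso.symm_hom, Iso.symm_inv] at h1'
  -- component computations from h3
  have hinl : biprod.inl ≫ c' = d₁ := by
    have h3l : (biprod.inl : D ⟶ D ⊞ A) ≫ (biprod.fst + biprod.snd ≫ f) ≫ d₁ =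
        biprod.inl ≫ biprod.map (𝟙 D) a ≫ c' := by rw [h3]
    simpa [Preadditive.comp_add, Preadditive.add_comp] using h3l.symm
  have hinr : a ≫ biprod.inr ≫ c' = f ≫ d₁ := by
    have h3r : (biprod.inr : A ⟶ D ⊞ A) ≫ (biprod.fst + biprod.snd ≫ f) ≫ d₁ =
        biprod.inr ≫ biprod.map (𝟙 D) a ≫ c' := by rw [h3]
    simpa [Preadditive.comp_add, Preadditive.add_comp] using h3r.symm
  refine ⟨biprod.inr ≫ c' ≫ i.hom, ⟨T.pull i.inv δ'', ?_⟩, ?_, ?_⟩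
  · have hdesc : biprod.desc d (biprod.inr ≫ c' ≫ i.hom) = c' ≫ i.hom := by
      apply biprod.hom_ext'
      · rw [biprod.inl_desc, ← assoc, hinl, hi1]
      · rw [biprod.inr_desc]
    rw [hdesc]
    exact h1'
  · have : a ≫ biprod.inr ≫ c' ≫ i.hom = (a ≫ biprod.inr ≫ c') ≫ i.hom := by
      simp only [assoc]
    rw [this, hinr, assoc, hi1]
  · have he : i.hom ≫ e = e₁ ≫ biprod.snd := by
      rw [← hi2]
      simp
    calc (biprod.inr ≫ c' ≫ i.hom) ≫ e = biprod.inr ≫ c' ≫ i.hom ≫ e := by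
          simp only [assoc]
      _ = biprod.inr ≫ (c' ≫ e₁) ≫ biprod.snd := by rw [he, assoc]
      _ = biprod.inr ≫ biprod.map 0 b ≫ biprod.snd := by rw [h4]
      _ = b := by simp
end ExtStmt
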